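/- Let n ≥ 2, let g ∈ SL_n(ℂ) satisfy (g^{-1} f g)_{i,j} = 0 for all j > i+1, and let i ∈ [n-1]. Then it is not the case that both Δ_i(g) = 0 and (g^{-1} f g)_{i,i+1} = 0. -/
import Mathlib


open Matrix

attribute [local instance] Classical.propDecidable

noncomputable section

namespace PetersonPaper

/-- Zero above the diagonal: `M i j = 0` whenever `i < j` (lower triangular). -/
def lowerTri (n : ℕ) (M : Matrix (Fin n) (Fin n) ℂ) : Prop :=
  ∀ i j : Fin n, i < j → M i j = 0

/-- Zero below the diagonal: `M i j = 0` whenever `j < i` (upper triangular). -/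
def upperTri (n : ℕ) (M : Matrix (Fin n) (Fin n) ℂ) : Prop :=
  ∀ i j : Fin n, j < i → M i j = 0

/-- The regular nilpotent matrix `f`, with `(i,j)` entry `1` iff `i = j+1`. -/
def fMat (n : ℕ) : Matrix (Fin n) (Fin n) ℂ :=
  fun i j => if (i : ℕ) = (j : ℕ) + 1 then 1 else 0

/-- `Δ_i(g)`: the lower-right `(n-i)×(n-i)` minor of `g`.  Here `i : Fin (n-1)`
encodes the (1-based) index `i.1 + 1 ∈ {1,…,n-1}`. -/
def Delta (n : ℕ) (g : Matrix (Fin n) (Fin n) ℂ) (i : Fin (n-1)) : ℂ :=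
  (g.submatrix
    (fun k : Fin (n - (i.1 + 1)) => (⟨k.1 + (i.1 + 1), by have := k.isLt; omega⟩ : Fin n))
    (fun k : Fin (n - (i.1 + 1)) => (⟨k.1 + (i.1 + 1), by have := k.isLt; omega⟩ : Fin n))).det

/-- `q_i(g) = -(g⁻¹ f g)_{i,i+1}` (1-based indices; `i : Fin (n-1)` encodes `i.1+1`). -/
def qfun (n : ℕ) (g : Matrix (Fin n) (Fin n) ℂ) (i : Fin (n-1)) : ℂ :=
  -((g⁻¹ * fMat n * g) (⟨i.1, by have := i.isLt; omega⟩ : Fin n)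
      (⟨i.1 + 1, by have := i.isLt; omega⟩ : Fin n))

/-- The (0-based) gap `c` (between positions `c` and `c+1` of `Fin n`) belongs to
`J ⊆ [n-1]`; `c` encodes the 1-based element `c+1` of `[n-1]`. -/
def gapMem (n : ℕ) (J : Set (Fin (n-1))) (c : ℕ) : Prop :=
  ∃ h : c < n - 1, (⟨c, h⟩ : Fin (n-1)) ∈ J

/-- The (0-based) first position of the block of the partition of `{0,…,n-1}`
determined by `J` containing the position `p`. -/
def blockStart (n : ℕ) (J : Set (Fin (n-1))) (p : Fin n) : ℕ :=
  sInf {a : ℕ | a ≤ p.1 ∧ ∀ c : ℕ, a ≤ c → c < p.1 → gapMem n J c}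

/-- The (0-based) last position of the block of the partition of `{0,…,n-1}`
determined by `J` containing the position `p`. -/
def blockEnd (n : ℕ) (J : Set (Fin (n-1))) (p : Fin n) : ℕ :=
  sSup {b : ℕ | b < n ∧ p.1 ≤ b ∧ ∀ c : ℕ, p.1 ≤ c → c < b → gapMem n J c}

lemma blockStart_le (n : ℕ) (J : Set (Fin (n-1))) (p : Fin n) : blockStart n J p ≤ p.1 :=
  Nat.sInf_le ⟨le_refl _, fun c hc1 hc2 => absurd (lt_of_le_of_lt hc1 hc2) (lt_irrefl _)⟩

lemma blockEnd_mem (n : ℕ) (J : Set (Fin (n-1))) (p : Fin n) :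
    blockEnd n J p ∈ {b : ℕ | b < n ∧ p.1 ≤ b ∧ ∀ c : ℕ, p.1 ≤ c → c < b → gapMem n J c} :=
  Nat.sSup_mem
    ⟨p.1, p.isLt, le_refl _, fun c hc1 hc2 => absurd (lt_of_le_of_lt hc1 hc2) (lt_irrefl _)⟩
    ⟨n, fun _ hb => le_of_lt hb.1⟩

lemma blockEnd_lt (n : ℕ) (J : Set (Fin (n-1))) (p : Fin n) : blockEnd n J p < n :=
  (blockEnd_mem n J p).1

lemma le_blockEnd (n : ℕ) (J : Set (Fin (n-1))) (p : Fin n) : p.1 ≤ blockEnd n J p :=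
  (blockEnd_mem n J p).2.1

/-- The representative `ẇ_J` of the longest element of the Young subgroup determined
by `J ⊆ [n-1]`: block diagonal, with the antidiagonal matrix with entries
`(-1)^(row - blockStart)` on each block of the partition determined by `J`. -/
def wJ (n : ℕ) (J : Set (Fin (n-1))) : Matrix (Fin n) (Fin n) ℂ :=
  fun p q =>
    if (p : ℕ) + (q : ℕ) = blockStart n J p + blockEnd n J p
    then (-1 : ℂ) ^ ((p : ℕ) - blockStart n J p) else 0

/-- A `J`-Toeplitz matrix: block diagonal with respect to the partition determined by
`J`, each block being lower triangular Toeplitz with `1`'s on the diagonal. -/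
def IsJToeplitz (n : ℕ) (J : Set (Fin (n-1))) (x : Matrix (Fin n) (Fin n) ℂ) : Prop :=
  ∃ c : ℕ → ℕ → ℂ, (∀ a, c a 0 = 1) ∧
    ∀ p q : Fin n, x p q =
      if blockStart n J p = blockStart n J q ∧ (q : ℕ) ≤ (p : ℕ)
      then c (blockStart n J p) ((p : ℕ) - (q : ℕ)) else 0

/-- `g ∈ B⁺ ẇ_K B⁻` (at the level of matrices of determinant 1). -/
def inBruhatPlus (n : ℕ) (K : Set (Fin (n-1))) (g : Matrix (Fin n) (Fin n) ℂ) : Prop :=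
  ∃ b₁ b₂ : Matrix (Fin n) (Fin n) ℂ,
    b₁.det = 1 ∧ b₂.det = 1 ∧ upperTri n b₁ ∧ lowerTri n b₂ ∧ g = b₁ * wJ n K * b₂

/-- `g ∈ B⁻ ẇ_J B⁻` (at the level of matrices of determinant 1). -/
def inBruhatMinus (n : ℕ) (J : Set (Fin (n-1))) (g : Matrix (Fin n) (Fin n) ℂ) : Prop :=
  ∃ b₁ b₂ : Matrix (Fin n) (Fin n) ℂ,
    b₁.det = 1 ∧ b₂.det = 1 ∧ lowerTri n b₁ ∧ lowerTri n b₂ ∧ g = b₁ * wJ n J * b₂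


/-- Embedding of `Fin m` into the last `m` positions of `Fin n`. -/
def embF (n k m : ℕ) (h : k + m = n) : Fin m → Fin n :=
  fun j => ⟨j.1 + k, by have := j.isLt; omega⟩

lemma embF_val (n k m : ℕ) (h : k + m = n) (j : Fin m) :
    ((embF n k m h j : Fin n) : ℕ) = j.1 + k := rfl

lemma embF_inj (n k m : ℕ) (h : k + m = n) : Function.Injective (embF n k m h) := by
  intro a b hab
  have : a.1 + k = b.1 + k := congrArg Fin.val hab
  exact Fin.ext (by omega)

lemma sum_shift {n k m : ℕ} (h : k + m = n) (F : Fin n → ℂ)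
    (hF : ∀ d : Fin n, (d : ℕ) < k → F d = 0) :
    ∑ d : Fin n, F d = ∑ j : Fin m, F (embF n k m h j) := by
  subst h
  rw [Fin.sum_univ_add]
  have h1 : ∑ i : Fin k, F (Fin.castAdd m i) = 0 :=
    Finset.sum_eq_zero fun i _ => hF _ (by simpa using i.isLt)
  rw [h1, zero_add]
  refine Finset.sum_congr rfl fun j _ => ?_
  congr 1
  exact Fin.ext (by simp [embF, Nat.add_comm])

lemma fMat_pow (n m : ℕ) (a b : Fin n) :
    (fMat n ^ m) a b = if (a : ℕ) = (b : ℕ) + m then 1 else 0 := by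
  induction m generalizing a b with
  | zero => simp [Matrix.one_apply, Fin.ext_iff]
  | succ m ih =>
    rw [pow_succ, Matrix.mul_apply]
    by_cases hb : (b : ℕ) + 1 < n
    · rw [Finset.sum_eq_single (⟨b.1 + 1, hb⟩ : Fin n)]
      · rw [ih]
        have hf : fMat n (⟨b.1 + 1, hb⟩ : Fin n) b = 1 := by
          simp [fMat]
        rw [hf, mul_one]
        have he : (b : ℕ) + 1 + m = (b : ℕ) + (m + 1) := by omega
        rw [he]
      · intro c _ hc
        have hz : fMat n c b = 0 := by
          rw [fMat, if_neg]
          intro hcb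
          exact hc (Fin.ext hcb)
        rw [hz, mul_zero]
      · intro h; exact absurd (Finset.mem_univ _) h
    · rw [Finset.sum_eq_zero, if_neg]
      · have := a.isLt; omega
      · intro c _
        have hz : fMat n c b = 0 := by
          rw [fMat, if_neg]
          have := c.isLt; omega
        rw [hz, mul_zero]

/-- Powers of a block-lower-triangular matrix stay block-lower-triangular. -/
lemma blockPow {n k : ℕ} (X : Matrix (Fin n) (Fin n) ℂ)
    (hA : ∀ a b : Fin n, (a : ℕ) < k → k ≤ (b : ℕ) → X a b = 0) (j : ℕ) :
    ∀ a b : Fin n, (a : ℕ) < k → k ≤ (b : ℕ) → (X ^ j) a b = 0 := by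
  induction j with
  | zero =>
    intro a b ha hb
    rw [pow_zero, Matrix.one_apply, if_neg]
    intro h; subst h; omega
  | succ j ih =>
    intro a b ha hb
    rw [pow_succ, Matrix.mul_apply]
    apply Finset.sum_eq_zero
    intro c _
    by_cases hc : k ≤ (c : ℕ)
    · rw [ih a c ha hc, zero_mul]
    · rw [hA c b (by omega) hb, mul_zero]

/-- The bottom-right block of a power is the power of the bottom-right block,
for a block-lower-triangular matrix. -/
lemma pow_submatrix {n k m : ℕ} (hkm : k + m = n) (X : Matrix (Fin n) (Fin n) ℂ)
    (hA : ∀ a b : Fin n, (a : ℕ) < k → k ≤ (b : ℕ) → X a b = 0) (j : ℕ) :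
    (X.submatrix (embF n k m hkm) (embF n k m hkm)) ^ j
      = (X ^ j).submatrix (embF n k m hkm) (embF n k m hkm) := by
  induction j with
  | zero =>
    ext a b
    rw [pow_zero, pow_zero, Matrix.submatrix_apply]
    by_cases h : a = b
    · subst h; simp [Matrix.one_apply]
    · rw [Matrix.one_apply_ne h, Matrix.one_apply_ne (fun he => h (embF_inj n k m hkm he))]
  | succ j ih =>
    ext a b
    rw [pow_succ, pow_succ, Matrix.submatrix_apply, Matrix.mul_apply, Matrix.mul_apply]
    rw [sum_shift hkm (fun d => (X ^ j) (embF n k m hkm a) d * X d (embF n k m hkm b))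
      (fun d hd => by
        show (X ^ j) (embF n k m hkm a) d * X d (embF n k m hkm b) = 0
        rw [hA d (embF n k m hkm b) hd (by rw [embF_val]; omega), mul_zero])]
    refine Finset.sum_congr rfl fun c _ => ?_
    rw [ih, Matrix.submatrix_apply, Matrix.submatrix_apply]

/-- If `g` is block lower triangular and its bottom-right block is singular,
then `g` is singular. -/
lemma key_det {n k m : ℕ} (hkm : k + m = n) (g : Matrix (Fin n) (Fin n) ℂ)
    (hblk : ∀ c b : Fin n, (c : ℕ) < k → k ≤ (b : ℕ) → g c b = 0)
    (hD : (g.submatrix (embF n k m hkm) (embF n k m hkm)).det = 0) :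
    g.det = 0 := by
  obtain ⟨v, hv0, hv⟩ := (Matrix.exists_mulVec_eq_zero_iff).mpr hD
  classical
  set w : Fin n → ℂ :=
    fun d => if h : k ≤ (d : ℕ) then v ⟨d.1 - k, by have := d.isLt; omega⟩ else 0 with hw
  have hwemb : ∀ j : Fin m, w (embF n k m hkm j) = v j := by
    intro j
    rw [hw]
    simp only
    rw [dif_pos (by rw [embF_val]; omega)]
    congr 1
    exact Fin.ext (by simp [embF_val])
  have hw0 : w ≠ 0 := by
    intro hcontra
    apply hv0
    funext j
    have h6 := congrFun hcontra (embF n k m hkm j)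
    rw [hwemb j] at h6
    exact h6
  have hgw : g *ᵥ w = 0 := by
    funext c
    show ∑ d, g c d * w d = 0
    by_cases hc : (c : ℕ) < k
    · apply Finset.sum_eq_zero
      intro d _
      by_cases hd : k ≤ (d : ℕ)
      · rw [hblk c d hc hd, zero_mul]
      · rw [hw]; simp only; rw [dif_neg hd, mul_zero]
    · rw [sum_shift hkm (fun d => g c d * w d)
        (fun d hd => by rw [hw]; simp only; rw [dif_neg (by omega), mul_zero])]
      have hc' : (c : ℕ) - k < m := by have := c.isLt; omega
      have hce : c = embF n k m hkm ⟨c.1 - k, hc'⟩ := Fin.ext (show (c : ℕ) = (c : ℕ) - k + k by omega)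
      have h2 := congrFun hv ⟨c.1 - k, hc'⟩
      calc ∑ j : Fin m, g c (embF n k m hkm j) * w (embF n k m hkm j)
          = ∑ j : Fin m,
              (g.submatrix (embF n k m hkm) (embF n k m hkm)) ⟨c.1 - k, hc'⟩ j * v j := by
            refine Finset.sum_congr rfl fun j _ => ?_
            rw [hwemb j, Matrix.submatrix_apply, ← hce]
        _ = 0 := h2
  exact Matrix.exists_mulVec_eq_zero_iff.mp ⟨w, hw0, hgw⟩

/-- Proposition: for `g ∈ SL_n(ℂ)` satisfying the Peterson condition, `Δ_i(g)` and
`(g⁻¹ f g)_{i,i+1}` are not both zero. -/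
theorem Delta_q_not_both_zero (n : ℕ) (hn : 2 ≤ n)
    (g : Matrix (Fin n) (Fin n) ℂ) (hdet : g.det = 1)
    (hPet : ∀ i j : Fin n, (i : ℕ) + 1 < (j : ℕ) → (g⁻¹ * fMat n * g) i j = 0)
    (i : Fin (n-1)) :
    ¬(Delta n g i = 0 ∧
      (g⁻¹ * fMat n * g) (⟨i.1, by have := i.isLt; omega⟩ : Fin n)
        (⟨i.1 + 1, by have := i.isLt; omega⟩ : Fin n) = 0) := by
  rintro ⟨hDelta, hq⟩
  have hi := i.isLt
  set k := i.1 + 1 with hk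
  have hkn : k < n := by omega
  set m := n - k with hm
  have hkm : k + m = n := by omega
  set X := g⁻¹ * fMat n * g with hX
  have hgu : IsUnit g.det := by rw [hdet]; exact isUnit_one
  have hginv : g * g⁻¹ = 1 := Matrix.mul_nonsing_inv g hgu
  have hinvg : g⁻¹ * g = 1 := Matrix.nonsing_inv_mul g hgu
  -- X is block lower triangular with split at k
  have hA : ∀ a b : Fin n, (a : ℕ) < k → k ≤ (b : ℕ) → X a b = 0 := by
    intro a b ha hb
    by_cases h : (a : ℕ) + 1 < (b : ℕ)
    · exact hPet a b h
    · have ha' : a = (⟨i.1, by omega⟩ : Fin n) := Fin.ext (show (a : ℕ) = i.1 by omega)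
      have hb' : b = (⟨i.1 + 1, by omega⟩ : Fin n) := Fin.ext (show (b : ℕ) = i.1 + 1 by have := b.isLt; omega)
      rw [ha', hb']
      exact hq
  -- g * X^j = f^j * g
  have hgX : g * X = fMat n * g := by
    rw [hX, ← Matrix.mul_assoc, ← Matrix.mul_assoc, hginv, Matrix.one_mul]
  have hC : ∀ j : ℕ, g * X ^ j = fMat n ^ j * g := by
    intro j
    induction j with
    | zero => simp
    | succ j ih =>
      rw [pow_succ, ← Matrix.mul_assoc, ih, Matrix.mul_assoc, hgX, ← Matrix.mul_assoc,
        ← pow_succ]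
  -- f^n = 0, hence X^n = 0
  have hfn : fMat n ^ n = 0 := by
    ext a b
    rw [fMat_pow, if_neg, Matrix.zero_apply]
    have := a.isLt; omega
  have hXn : X ^ n = 0 := by
    have h1 := hC n
    rw [hfn, Matrix.zero_mul] at h1
    calc X ^ n = g⁻¹ * g * X ^ n := by rw [hinvg, Matrix.one_mul]
      _ = g⁻¹ * (g * X ^ n) := by rw [Matrix.mul_assoc]
      _ = 0 := by rw [h1, Matrix.mul_zero]
  -- the bottom-right block Y of X is nilpotent of size m, so Y^m = 0
  set Y := X.submatrix (embF n k m hkm) (embF n k m hkm) with hY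
  have hYn : Y ^ n = 0 := by
    rw [hY, pow_submatrix hkm X hA, hXn]
    ext a b
    simp
  have hYnil : IsNilpotent Y := ⟨n, hYn⟩
  have hchar : Y.charpoly = Polynomial.X ^ m := by
    have h2 := Matrix.isNilpotent_charpoly_sub_pow_of_isNilpotent hYnil
    have h3 := h2.eq_zero
    rw [sub_eq_zero] at h3
    rw [h3, Fintype.card_fin]
  have hYm : Y ^ m = 0 := by
    have h4 := Y.aeval_self_charpoly
    rw [hchar] at h4
    simpa using h4
  -- columns ≥ k of X^m vanish entirely
  have hcol : ∀ d b : Fin n, k ≤ (b : ℕ) → (X ^ m) d b = 0 := by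
    intro d b hb
    by_cases hd : (d : ℕ) < k
    · exact blockPow X hA m d b hd hb
    · have hd' : (d : ℕ) - k < m := by have := d.isLt; omega
      have hb' : (b : ℕ) - k < m := by have := b.isLt; omega
      have hdd : d = embF n k m hkm ⟨d.1 - k, hd'⟩ := Fin.ext (show (d : ℕ) = (d : ℕ) - k + k by omega)
      have hbb : b = embF n k m hkm ⟨b.1 - k, hb'⟩ := Fin.ext (show (b : ℕ) = (b : ℕ) - k + k by omega)
      have h5 : (Y ^ m) ⟨d.1 - k, hd'⟩ ⟨b.1 - k, hb'⟩ = 0 := by rw [hYm]; rfl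
      rw [hY, pow_submatrix hkm X hA, Matrix.submatrix_apply] at h5
      rwa [← hdd, ← hbb] at h5
  -- g is block lower triangular
  have hblk : ∀ c b : Fin n, (c : ℕ) < k → k ≤ (b : ℕ) → g c b = 0 := by
    intro c b hc hb
    have hcm : c.1 + m < n := by omega
    have h1 := congrFun (congrFun (hC m) (⟨c.1 + m, hcm⟩ : Fin n)) b
    rw [Matrix.mul_apply, Matrix.mul_apply] at h1
    rw [Finset.sum_eq_zero (fun d _ => by rw [hcol d b hb, mul_zero])] at h1
    have h2 : ∑ d, (fMat n ^ m) (⟨c.1 + m, hcm⟩ : Fin n) d * g d b = g c b := by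
      rw [Finset.sum_eq_single c]
      · rw [fMat_pow, if_pos rfl, one_mul]
      · intro d _ hd
        rw [fMat_pow, if_neg, zero_mul]
        intro h
        have h' : c.1 + m = (d : ℕ) + m := h
        exact hd (Fin.ext (by omega))
      · intro h; exact absurd (Finset.mem_univ _) h
    rw [h2] at h1
    exact h1.symm
  -- the bottom-right block of g is singular
  have hD : (g.submatrix (embF n k m hkm) (embF n k m hkm)).det = 0 := by
    have hdef : Delta n g i = (g.submatrix (embF n k m hkm) (embF n k m hkm)).det := rfl
    rw [← hdef]
    exact hDelta
  have hzero := key_det hkm g hblk hD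
  rw [hdet] at hzero
  exact one_ne_zero hzero


end PetersonPaper
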